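/- Let G be a connected bridgeless planar cubic (trivalent) graph embedded in the plane. Then the number of proper 4-colorings of the faces of G (colorings of faces with 4 colors such that faces sharing an edge receive different colors) equals 4 times the number of proper 3-edge-colorings of G. -/

import Mathlib

/-!
A combinatorial map (rotation system): darts `D`, vertex rotation `σ`,
edge involution `α` (fixed-point free).  Vertices are the cycles of `σ`,
edges the cycles of `α`, and faces the cycles of `φ = σ * α`.
Planarity of a connected map is expressed by Euler's formula `V + F = E + 2`.
-/

structure CombMap where
  D : Type
  [fin : Fintype D]
  [deq : DecidableEq D]
  σ : Equiv.Perm D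
  α : Equiv.Perm D
  α_invol : ∀ d, α (α d) = d
  α_fpf : ∀ d, α d ≠ d

attribute [instance] CombMap.fin CombMap.deq

namespace CombMap

variable (M : CombMap)

/-- The face permutation. -/
def φ : Equiv.Perm M.D := M.σ * M.α

/-- Every vertex is trivalent. -/
def Cubic : Prop := (∀ d, M.σ (M.σ (M.σ d)) = d) ∧ ∀ d, M.σ d ≠ d

/-- The map is connected. -/
def Connected : Prop :=
  ∀ d e : M.D, Relation.ReflTransGen (fun x y => M.σ x = y ∨ M.α x = y) d e

def sameCycleSetoid (f : Equiv.Perm M.D) : Setoid M.D where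
  r := f.SameCycle
  iseqv := ⟨fun x => Equiv.Perm.SameCycle.refl f x, fun h => h.symm, fun h h' => h.trans h'⟩

/-- The number of cycles (orbits) of a permutation of the darts. -/
noncomputable def numCycles (f : Equiv.Perm M.D) : ℕ := Nat.card (Quotient (M.sameCycleSetoid f))

/-- A connected map is planar iff Euler's formula `V - E + F = 2` holds. -/
def Planar : Prop :=
  M.Connected ∧ M.numCycles M.σ + M.numCycles M.φ = M.numCycles M.α + 2

/-- No edge has the same face on both of its sides (for a plane graph this
is equivalent to having no bridge). -/
def Bridgeless : Prop := ∀ d, ¬ M.φ.SameCycle d (M.α d)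

/-- A proper `n`-face-coloring, encoded as a function on darts that is
constant on faces and assigns different colors to the two sides of each edge. -/
def FaceColoring (n : ℕ) (c : M.D → Fin n) : Prop :=
  (∀ d, c (M.φ d) = c d) ∧ ∀ d, c d ≠ c (M.α d)

/-- A proper `n`-edge-coloring, encoded as a function on darts that is
constant on edges and assigns different colors to distinct edges at a vertex. -/
def EdgeColoring (n : ℕ) (c : M.D → Fin n) : Prop :=
  (∀ d, c (M.α d) = c d) ∧ ∀ d, c d ≠ c (M.σ d)

end CombMap

namespace TaitAux
open Module LinearMap Submodule

/-! ### Klein four-group combinatorics -/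

abbrev K2 : Type := ZMod 2 × ZMod 2

def k4 : Fin 4 → K2 := ![(0,0),(0,1),(1,0),(1,1)]
def k4inv : K2 → Fin 4 := fun x =>
  if x = (0,0) then 0 else if x = (0,1) then 1 else if x = (1,0) then 2 else 3
def i3 : Fin 3 → K2 := ![(0,1),(1,0),(1,1)]
def p3 : K2 → Fin 3 := fun x => if x = (0,1) then 0 else if x = (1,0) then 1 else 2

lemma k4_inj : Function.Injective k4 := by decide
lemma k4_k4inv : ∀ x, k4 (k4inv x) = x := by decide
lemma p3_i3 : ∀ i, p3 (i3 i) = i := by decide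
lemma i3_ne_zero : ∀ i, i3 i ≠ 0 := by decide
lemma i3_p3 : ∀ x, x ≠ 0 → i3 (p3 x) = x := by decide
lemma K2_add_self : ∀ x : K2, x + x = 0 := by decide
lemma K2_eq_of_add_eq_zero : ∀ x y : K2, x + y = 0 → x = y := by decide
lemma K2_cancel2 : ∀ a b c : K2, a + b = b + c → a = c := by decide
lemma i3_sum_zero : ∀ i j l : Fin 3, i ≠ j → j ≠ l → l ≠ i → i3 i + i3 j + i3 l = 0 := by decide
lemma K2_rearrange : ∀ a x b y : K2, a + x = b + y → a + b = x + y := by decide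
lemma K2_cancel : ∀ a b s : K2, (a + s) + (b + s) = a + b := by decide
lemma K2_shift : ∀ a k : K2, a + (k + a) = k := by decide
lemma Z2_add_self : ∀ a : ZMod 2, a + a = 0 := by decide
lemma Z2_triple : ∀ a : ZMod 2, a + (a + a) = a := by decide
lemma Z2_eq_of_add_eq_zero : ∀ a b : ZMod 2, a + b = 0 → a = b := by decide

end TaitAux

namespace CombMap
open Module LinearMap Submodule TaitAux

variable (M : CombMap)

lemma phi_apply (d : M.D) : M.φ d = M.σ (M.α d) := rfl

/-- invariance under integer iterates -/
lemma inv_zpow {X : Type*} {f : Equiv.Perm M.D} {u : M.D → X}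
    (h : ∀ d, u (f d) = u d) : ∀ (n : ℤ) (d : M.D), u ((f ^ n) d) = u d := by
  have hinv : ∀ d, u (f⁻¹ d) = u d := by
    intro d; conv_rhs => rw [← (show f (f⁻¹ d) = d from Equiv.apply_symm_apply f d)]
    rw [h]
  intro n
  induction n using Int.induction_on with
  | zero => simp
  | succ k ih =>
      intro d
      have h1 : ((f ^ ((k : ℤ) + 1))) d = f ((f ^ (k : ℤ)) d) := by
        rw [add_comm, zpow_one_add]; rfl
      rw [h1, h, ih]
  | pred k ih =>
      intro d
      have h1 : ((f ^ (-(k : ℤ) - 1))) d = f⁻¹ ((f ^ (-(k : ℤ))) d) := by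
        rw [sub_eq_add_neg, add_comm, zpow_add, zpow_neg_one]; rfl
      rw [h1, hinv, ih]

lemma inv_sameCycle {X : Type*} {f : Equiv.Perm M.D} {u : M.D → X}
    (h : ∀ d, u (f d) = u d) {a b : M.D} (hab : f.SameCycle a b) : u a = u b := by
  obtain ⟨n, hn⟩ := hab
  rw [← hn, M.inv_zpow h]

/-- invariance along connectivity -/
lemma inv_conn {X : Type*} {u : M.D → X}
    (hσ : ∀ d, u (M.σ d) = u d) (hα : ∀ d, u (M.α d) = u d) {x y : M.D}
    (h : Relation.ReflTransGen (fun a b => M.σ a = b ∨ M.α a = b) x y) : u x = u y := by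
  induction h with
  | refl => rfl
  | tail _ hbc ih =>
      rcases hbc with h | h <;> rw [ih, ← h]
      · exact (hσ _).symm
      · exact (hα _).symm

/-- a `φ`-invariant function takes the same value on `α d` and `σ d`. -/
lemma alpha_eq_sigma {X : Type*} {u : M.D → X}
    (h : ∀ d, u (M.φ d) = u d) (d : M.D) : u (M.α d) = u (M.σ d) := by
  have := h (M.α d)
  rw [phi_apply, M.α_invol] at this
  exact this.symm

lemma sigma_ne2 (hcub : M.Cubic) (d : M.D) : M.σ (M.σ d) ≠ d := by
  intro h
  have := congrArg M.σ h
  rw [hcub.1] at this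
  exact hcub.2 d this.symm

lemma zpow_orbit (hcub : M.Cubic) : ∀ (n : ℤ) (x : M.D),
    (M.σ ^ n) x = x ∨ (M.σ ^ n) x = M.σ x ∨ (M.σ ^ n) x = M.σ (M.σ x) := by
  have hinv : ∀ x : M.D, M.σ⁻¹ x = M.σ (M.σ x) := by
    intro x
    apply M.σ.injective
    rw [(show M.σ (M.σ⁻¹ x) = x from Equiv.apply_symm_apply M.σ x), hcub.1]
  intro n
  induction n using Int.induction_on with
  | zero => intro x; simp
  | succ k ih =>
      intro x
      have h1 : ((M.σ ^ ((k : ℤ) + 1))) x = M.σ ((M.σ ^ (k : ℤ)) x) := by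
        rw [add_comm, zpow_one_add]; rfl
      rw [h1]
      rcases ih x with h | h | h <;> rw [h]
      · right; left; rfl
      · right; right; rfl
      · left; exact hcub.1 x
  | pred k ih =>
      intro x
      have h1 : ((M.σ ^ (-(k : ℤ) - 1))) x = M.σ⁻¹ ((M.σ ^ (-(k : ℤ))) x) := by
        rw [sub_eq_add_neg, add_comm, zpow_add, zpow_neg_one]; rfl
      rw [h1]
      rcases ih x with h | h | h <;> rw [h]
      · right; right; exact hinv x
      · left; exact Equiv.symm_apply_apply _ _
      · right; left
        exact Equiv.symm_apply_apply M.σ (M.σ x)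

lemma sameCycle_iff (hcub : M.Cubic) (x d : M.D) :
    M.σ.SameCycle x d ↔ (x = d ∨ x = M.σ d ∨ x = M.σ (M.σ d)) := by
  constructor
  · rintro ⟨n, hn⟩
    rcases M.zpow_orbit hcub n x with h | h | h <;> rw [hn] at h
    · exact Or.inl h.symm
    · right; right
      rw [h, hcub.1]
    · right; left
      rw [h, hcub.1]
  · have hstep : ∀ y : M.D, M.σ.SameCycle (M.σ y) y := fun y => ⟨-1, by simp⟩
    rintro (rfl | rfl | rfl)
    · exact Equiv.Perm.SameCycle.refl _ _
    · exact hstep d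
    · exact (hstep (M.σ d)).trans (hstep d)

/-! ### Linear algebra setup over `ZMod 2` -/

/-- the submodule of functions invariant under a permutation -/
def invSub (f : Equiv.Perm M.D) : Submodule (ZMod 2) (M.D → ZMod 2) where
  carrier := {c | ∀ d, c (f d) = c d}
  add_mem' := by intro a b ha hb d; simp [ha d, hb d]
  zero_mem' := by intro d; rfl
  smul_mem' := by intro r a ha d; simp [ha d]

lemma mem_invSub {f : Equiv.Perm M.D} {c : M.D → ZMod 2} :
    c ∈ M.invSub f ↔ ∀ d, c (f d) = c d := Iff.rfl

/-- the rank of the invariant subspace is the number of cycles -/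
lemma finrank_invSub (f : Equiv.Perm M.D) :
    finrank (ZMod 2) (M.invSub f) = M.numCycles f := by
  letI : Fintype (Quotient (M.sameCycleSetoid f)) := Fintype.ofFinite _
  have e : (Quotient (M.sameCycleSetoid f) → ZMod 2) ≃ₗ[ZMod 2] M.invSub f :=
    { toFun := fun g => ⟨fun d => g (Quotient.mk _ d), by
        intro d
        have hs : (M.sameCycleSetoid f).r (f d) d := ⟨-1, by simp⟩
        exact congrArg g (Quotient.sound hs)⟩
      map_add' := by intros; rfl
      map_smul' := by intros; rfl
      invFun := fun c => fun q => Quotient.liftOn q c.1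
        (fun a b hab => M.inv_sameCycle c.2 hab)
      left_inv := by
        intro g; funext q
        induction q using Quotient.inductionOn with
        | h d => rfl
      right_inv := by
        intro c; apply Subtype.ext; funext d; rfl }
  rw [← e.finrank_eq, finrank_fintype_fun_eq_card, numCycles, Nat.card_eq_fintype_card]

/-- coboundary operator: faces to edges -/
def thetaLM : (M.D → ZMod 2) →ₗ[ZMod 2] (M.D → ZMod 2) where
  toFun c := fun d => c d + c (M.σ d)
  map_add' := by intro a b; funext d; simp [Pi.add_apply]; ring
  map_smul' := by intro r a; funext d; simp [Pi.smul_apply, smul_eq_mul]; ring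

/-- vertex-sum operator -/
def psiLM : (M.D → ZMod 2) →ₗ[ZMod 2] (M.D → ZMod 2) where
  toFun c := fun d => c d + c (M.σ d) + c (M.σ (M.σ d))
  map_add' := by intro a b; funext d; simp [Pi.add_apply]; ring
  map_smul' := by intro r a; funext d; simp [Pi.smul_apply, smul_eq_mul]; ring

/-- total sum functional -/
def sumLM : (M.D → ZMod 2) →ₗ[ZMod 2] (ZMod 2) where
  toFun c := ∑ d, c d
  map_add' := by intro a b; simp [Finset.sum_add_distrib]
  map_smul' := by intro r a; simp [Finset.mul_sum]

lemma thetaLM_apply (c : M.D → ZMod 2) (d : M.D) :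
    M.thetaLM c d = c d + c (M.σ d) := rfl

lemma psiLM_apply (c : M.D → ZMod 2) (d : M.D) :
    M.psiLM c d = c d + c (M.σ d) + c (M.σ (M.σ d)) := rfl

noncomputable def Ssub : Submodule (ZMod 2) (M.D → ZMod 2) :=
  M.invSub M.σ ⊓ LinearMap.ker M.sumLM

noncomputable def Tsub : Submodule (ZMod 2) (M.D → ZMod 2) :=
  M.invSub M.α ⊓ LinearMap.ker M.psiLM

/-- vertex indicator -/
noncomputable def vind (x : M.D) : M.D → ZMod 2 :=
  fun d => if M.σ.SameCycle x d then 1 else 0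

/-- dart indicator -/
def dind (x : M.D) : M.D → ZMod 2 :=
  fun d => if d = x then 1 else 0

lemma vind_mem (x : M.D) : M.vind x ∈ M.invSub M.σ := by
  intro d
  unfold vind
  congr 1
  simp [Equiv.Perm.sameCycle_apply_right]

lemma vind_sigma (b : M.D) : M.vind (M.σ b) = M.vind b := by
  funext d
  unfold vind
  congr 1
  simp [Equiv.Perm.sameCycle_apply_left]

lemma eind_mem (y : M.D) : M.dind y + M.dind (M.α y) ∈ M.invSub M.α := by
  intro d
  have h1 : (M.α d = y) ↔ (d = M.α y) := by
    constructor
    · rintro rfl; rw [M.α_invol]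
    · rintro rfl; rw [M.α_invol]
  have h2 : (M.α d = M.α y) ↔ (d = y) := M.α.injective.eq_iff
  simp only [Pi.add_apply, dind]
  rw [if_congr h1 rfl rfl, if_congr h2 rfl rfl, add_comm]

lemma psi_dind (hcub : M.Cubic) (y : M.D) : M.psiLM (M.dind y) = M.vind y := by
  funext d
  have hne1 : d ≠ M.σ d := (hcub.2 d).symm
  have hne2 : d ≠ M.σ (M.σ d) := fun h => M.sigma_ne2 hcub d h.symm
  have hne3 : M.σ d ≠ M.σ (M.σ d) := fun h => hcub.2 d (M.σ.injective h).symm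
  rw [psiLM_apply]
  unfold vind dind
  simp only [M.sameCycle_iff hcub y d]
  by_cases h1 : y = d <;> by_cases h2 : y = M.σ d <;> by_cases h3 : y = M.σ (M.σ d) <;>
    simp_all [eq_comm]

/-- every "pair of vertices" indicator is a vertex-coboundary of an α-invariant function -/
lemma path_mem (hcub : M.Cubic) (x y : M.D)
    (h : Relation.ReflTransGen (fun a b => M.σ a = b ∨ M.α a = b) x y) :
    M.vind x + M.vind y ∈ Submodule.map M.psiLM (M.invSub M.α) := by
  induction h with
  | refl =>
      have : M.vind x + M.vind x = 0 := by
        funext d; exact Z2_add_self _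
      rw [this]; exact zero_mem _
  | @tail b c _ hbc ih =>
      rcases hbc with h | h
      · rw [← h, M.vind_sigma]; exact ih
      · rw [← h]
        have hmem : M.vind b + M.vind (M.α b) ∈ Submodule.map M.psiLM (M.invSub M.α) :=
          ⟨M.dind b + M.dind (M.α b), M.eind_mem b, by
            rw [map_add, M.psi_dind hcub, M.psi_dind hcub]⟩
        have heq : M.vind x + M.vind (M.α b) =
            (M.vind x + M.vind b) + (M.vind b + M.vind (M.α b)) := by
          funext d
          simp only [Pi.add_apply]
          generalize M.vind x d = a
          generalize M.vind b d = e
          generalize M.vind (M.α b) d = f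
          revert a e f
          decide
        rw [heq]
        exact add_mem ih hmem

lemma Ssub_le_map (hcub : M.Cubic) (hconn : M.Connected) :
    M.Ssub ≤ Submodule.map M.psiLM (M.invSub M.α) := by
  rcases isEmpty_or_nonempty M.D with hD | hD
  · intro g _
    have : g = 0 := funext fun d => isEmptyElim d
    rw [this]; exact zero_mem _
  intro g hg
  rw [Ssub, Submodule.mem_inf] at hg
  obtain ⟨hg1, hg2⟩ := hg
  rw [LinearMap.mem_ker, sumLM] at hg2
  simp only [LinearMap.coe_mk, AddHom.coe_mk] at hg2
  let d₀ : M.D := Classical.arbitrary M.D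
  have repr : g = ∑ d : M.D, g d • (M.vind d + M.vind d₀) := by
    funext x
    have hfilter : Finset.univ.filter (fun d => M.σ.SameCycle d x)
        = ({x, M.σ x, M.σ (M.σ x)} : Finset M.D) := by
      ext d
      simp [M.sameCycle_iff hcub d x]
    have hne1 : x ≠ M.σ x := (hcub.2 x).symm
    have hne2 : x ≠ M.σ (M.σ x) := fun h => M.sigma_ne2 hcub x h.symm
    have hne3 : M.σ x ≠ M.σ (M.σ x) := fun h => hcub.2 x (M.σ.injective h).symm
    have hsum : (∑ d : M.D, g d * M.vind d x) = g x := by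
      unfold vind
      simp only [mul_ite, mul_one, mul_zero]
      rw [← Finset.sum_filter, hfilter]
      rw [Finset.sum_insert (by simp [hne1, hne2]),
        Finset.sum_insert (by simp [hne3]), Finset.sum_singleton]
      rw [hg1 x, hg1 (M.σ x), hg1 x]
      exact Z2_triple _
    have hsum2 : (∑ d : M.D, g d * M.vind d₀ x) = 0 := by
      rw [← Finset.sum_mul, hg2, zero_mul]
    rw [Finset.sum_apply]
    simp only [Pi.smul_apply, Pi.add_apply, smul_eq_mul, mul_add]
    rw [Finset.sum_add_distrib, hsum, hsum2, add_zero]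
  rw [repr]
  exact Submodule.sum_mem _ fun d _ =>
    Submodule.smul_mem _ _ (M.path_mem hcub d d₀ (hconn d d₀))

lemma map_le_Ssub (hcub : M.Cubic) :
    Submodule.map M.psiLM (M.invSub M.α) ≤ M.Ssub := by
  rintro _ ⟨e, he, rfl⟩
  rw [Ssub, Submodule.mem_inf]
  constructor
  · intro d
    rw [psiLM_apply, psiLM_apply, hcub.1 d]
    ring
  · rw [LinearMap.mem_ker, sumLM]
    simp only [LinearMap.coe_mk, AddHom.coe_mk]
    have hsum0 : (∑ d, e d) = 0 := by
      apply Finset.sum_involution (fun d _ => M.α d)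
      · intro d _
        rw [he d]
        exact Z2_add_self _
      · intro d _ _
        exact M.α_fpf d
      · intro d _
        exact Finset.mem_univ _
      · intro d _
        exact M.α_invol d
    have h1 : (∑ d, e (M.σ d)) = ∑ d, e d := Equiv.sum_comp M.σ e
    have h2 : (∑ d, e (M.σ (M.σ d))) = ∑ d, e d := by
      have := Equiv.sum_comp (M.σ * M.σ) e
      simpa [Equiv.Perm.mul_apply] using this
    calc (∑ d, M.psiLM e d) = (∑ d, e d) + (∑ d, e (M.σ d)) + ∑ d, e (M.σ (M.σ d)) := by
          simp only [psiLM_apply]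
          rw [Finset.sum_add_distrib, Finset.sum_add_distrib]
      _ = 0 := by rw [h1, h2, hsum0]; ring

lemma Ssub_eq_map (hcub : M.Cubic) (hconn : M.Connected) :
    Submodule.map M.psiLM (M.invSub M.α) = M.Ssub :=
  le_antisymm (M.map_le_Ssub hcub) (M.Ssub_le_map hcub hconn)

set_option synthInstance.maxHeartbeats 1000000 in
/-- generic: finrank of kernel of a restricted map -/
lemma finrank_ker_domRestrict {W : Type*} [AddCommGroup W] [Module (ZMod 2) W]
    (f : (M.D → ZMod 2) →ₗ[ZMod 2] W) (S : Submodule (ZMod 2) (M.D → ZMod 2)) :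
    finrank (ZMod 2) (LinearMap.ker (f.domRestrict S)) =
      finrank (ZMod 2) ↥(S ⊓ LinearMap.ker f) := by
  rw [LinearMap.ker_domRestrict]
  have h1 : Submodule.comap S.subtype (LinearMap.ker f)
      = Submodule.comap S.subtype (S ⊓ LinearMap.ker f) := by
    ext x
    simp [x.2]
  rw [h1]
  exact (Submodule.comapSubtypeEquivOfLe (inf_le_left (a := S)
    (b := LinearMap.ker f))).finrank_eq

/-- the orbit of `x` as an explicit finset -/
lemma orbit_filter (hcub : M.Cubic) (x : M.D) :
    Finset.univ.filter (fun d => M.σ.SameCycle d x)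
      = ({x, M.σ x, M.σ (M.σ x)} : Finset M.D) := by
  ext d
  simp [M.sameCycle_iff hcub d x]

lemma sum_vind (hcub : M.Cubic) (x : M.D) : M.sumLM (M.vind x) = 1 := by
  have hne1 : x ≠ M.σ x := (hcub.2 x).symm
  have hne2 : x ≠ M.σ (M.σ x) := fun h => M.sigma_ne2 hcub x h.symm
  have hne3 : M.σ x ≠ M.σ (M.σ x) := fun h => hcub.2 x (M.σ.injective h).symm
  have hsymm : ∀ d : M.D, M.σ.SameCycle x d ↔ M.σ.SameCycle d x :=
    fun d => ⟨fun h => h.symm, fun h => h.symm⟩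
  rw [sumLM]
  simp only [LinearMap.coe_mk, AddHom.coe_mk]
  unfold vind
  simp only [hsymm]
  rw [← Finset.sum_filter, M.orbit_filter hcub x,
    Finset.sum_insert (by simp [hne1, hne2]),
    Finset.sum_insert (by simp [hne3]), Finset.sum_singleton]
  decide

/-- rank of Ssub -/
lemma finrank_Ssub (hcub : M.Cubic) (hne : Nonempty M.D) :
    finrank (ZMod 2) M.Ssub + 1 = M.numCycles M.σ := by
  have hrn := LinearMap.finrank_range_add_finrank_ker (M.sumLM.domRestrict (M.invSub M.σ))
  rw [M.finrank_ker_domRestrict M.sumLM (M.invSub M.σ)] at hrn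
  have hrange : LinearMap.range (M.sumLM.domRestrict (M.invSub M.σ)) = ⊤ := by
    rw [eq_top_iff]
    intro r _
    let d₀ : M.D := Classical.arbitrary M.D
    have hcases : ∀ r : ZMod 2, r = 0 ∨ r = 1 := by decide
    rcases hcases r with rfl | rfl
    · exact zero_mem _
    · exact ⟨⟨M.vind d₀, M.vind_mem d₀⟩, M.sum_vind hcub d₀⟩
  rw [hrange] at hrn
  have : finrank (ZMod 2) (⊤ : Submodule (ZMod 2) (ZMod 2)) = 1 := by
    rw [finrank_top, finrank_self]
  rw [this] at hrn
  have hS : M.invSub M.σ ⊓ LinearMap.ker M.sumLM = M.Ssub := rfl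
  rw [hS] at hrn
  rw [add_comm] at hrn
  rw [hrn, M.finrank_invSub]

/-- rank of Tsub -/
lemma finrank_Tsub (hcub : M.Cubic) (hconn : M.Connected) (hne : Nonempty M.D) :
    finrank (ZMod 2) M.Tsub + finrank (ZMod 2) M.Ssub = M.numCycles M.α := by
  have hrn := LinearMap.finrank_range_add_finrank_ker (M.psiLM.domRestrict (M.invSub M.α))
  rw [M.finrank_ker_domRestrict M.psiLM (M.invSub M.α)] at hrn
  rw [LinearMap.range_domRestrict, M.Ssub_eq_map hcub hconn] at hrn
  have hT : M.invSub M.α ⊓ LinearMap.ker M.psiLM = M.Tsub := rfl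
  rw [hT] at hrn
  rw [add_comm] at hrn
  rw [hrn, M.finrank_invSub]

/-- the coboundary of a face-invariant function lies in Tsub -/
lemma map_theta_le_Tsub (hcub : M.Cubic) :
    Submodule.map M.thetaLM (M.invSub M.φ) ≤ M.Tsub := by
  rintro _ ⟨c, hc, rfl⟩
  have hαφ : ∀ d, c (M.α d) = c (M.σ d) := M.alpha_eq_sigma hc
  rw [Tsub, Submodule.mem_inf]
  constructor
  · intro d
    rw [thetaLM_apply, thetaLM_apply, hαφ d]
    have h1 : c (M.σ (M.α d)) = c d := by
      rw [← phi_apply]; exact hc d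
    rw [h1]
    ring
  · rw [LinearMap.mem_ker]
    funext d
    rw [psiLM_apply, thetaLM_apply, thetaLM_apply, thetaLM_apply, hcub.1 d]
    simp only [Pi.zero_apply]
    ring_nf
    generalize c d = a
    generalize c (M.σ d) = b
    generalize c (M.σ (M.σ d)) = e
    revert a b e
    decide

/-- the kernel of theta restricted to face-invariant functions consists of constants -/
lemma finrank_ker_theta (hconn : M.Connected) (hne : Nonempty M.D) :
    finrank (ZMod 2) (LinearMap.ker (M.thetaLM.domRestrict (M.invSub M.φ))) = 1 := by
  let d₀ : M.D := Classical.arbitrary M.D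
  have e : ZMod 2 ≃ₗ[ZMod 2] LinearMap.ker (M.thetaLM.domRestrict (M.invSub M.φ)) :=
    { toFun := fun a => ⟨⟨fun _ => a, fun d => rfl⟩, by
        rw [LinearMap.mem_ker]
        funext d
        exact Z2_add_self a⟩
      map_add' := by intros; rfl
      map_smul' := by intros; rfl
      invFun := fun k => k.1.1 d₀
      left_inv := by intro a; rfl
      right_inv := by
        intro k
        obtain ⟨⟨c, hcφ⟩, hck⟩ := k
        rw [LinearMap.mem_ker] at hck
        have hσ : ∀ d, c (M.σ d) = c d := by
          intro d
          have := congrFun hck d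
          simp only [LinearMap.domRestrict_apply, thetaLM_apply, Pi.zero_apply] at this
          exact (Z2_eq_of_add_eq_zero _ _ this).symm
        have hα : ∀ d, c (M.α d) = c d := by
          intro d
          rw [M.alpha_eq_sigma hcφ d, hσ d]
        apply Subtype.ext
        apply Subtype.ext
        funext d
        show c d₀ = c d
        exact M.inv_conn hσ hα (hconn d₀ d) }
  rw [← e.finrank_eq, finrank_self]

/-- nonemptiness of darts from Euler's formula -/
lemma nonempty_of_planar (hplanar : M.Planar) : Nonempty M.D := by
  rcases isEmpty_or_nonempty M.D with hD | hD
  · exfalso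
    have hzero : ∀ f : Equiv.Perm M.D, M.numCycles f = 0 := by
      intro f
      haveI : IsEmpty (Quotient (M.sameCycleSetoid f)) :=
        ⟨fun q => Quotient.inductionOn q (fun d => isEmptyElim d)⟩
      exact Nat.card_of_isEmpty
    have := hplanar.2
    rw [hzero, hzero, hzero] at this
    omega
  · exact hD

/-- **Key surjectivity**: theta maps face-invariant functions onto Tsub -/
lemma theta_surj (hcub : M.Cubic) (hplanar : M.Planar) :
    Submodule.map M.thetaLM (M.invSub M.φ) = M.Tsub := by
  have hconn := hplanar.1
  have hne := M.nonempty_of_planar hplanar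
  apply Submodule.eq_of_le_of_finrank_le (M.map_theta_le_Tsub hcub)
  -- finranks
  have hrn := LinearMap.finrank_range_add_finrank_ker (M.thetaLM.domRestrict (M.invSub M.φ))
  rw [LinearMap.range_domRestrict, M.finrank_ker_theta hconn hne, M.finrank_invSub] at hrn
  have h1 := M.finrank_Ssub hcub hne
  have h2 := M.finrank_Tsub hcub hconn hne
  have heuler := hplanar.2
  omega

/-- the lifting lemma over `ZMod 2` -/
lemma lift_z2 (hcub : M.Cubic) (hplanar : M.Planar) (e : M.D → ZMod 2)
    (heα : ∀ d, e (M.α d) = e d)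
    (hv : ∀ d, e d + e (M.σ d) + e (M.σ (M.σ d)) = 0) :
    ∃ c : M.D → ZMod 2, (∀ d, c (M.φ d) = c d) ∧ ∀ d, c d + c (M.σ d) = e d := by
  have hmem : e ∈ M.Tsub := by
    rw [Tsub, Submodule.mem_inf]
    refine ⟨heα, ?_⟩
    rw [LinearMap.mem_ker]
    funext d
    exact hv d
  rw [← M.theta_surj hcub hplanar] at hmem
  obtain ⟨c, hc, hce⟩ := hmem
  exact ⟨c, hc, fun d => by rw [← hce]; rfl⟩

/-- the lifting lemma over the Klein four-group -/
lemma lift_K2 (hcub : M.Cubic) (hplanar : M.Planar) (e : M.D → TaitAux.K2)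
    (heα : ∀ d, e (M.α d) = e d)
    (hv : ∀ d, e d + e (M.σ d) + e (M.σ (M.σ d)) = 0) :
    ∃ c : M.D → TaitAux.K2, (∀ d, c (M.φ d) = c d) ∧ ∀ d, c d + c (M.σ d) = e d := by
  obtain ⟨c1, hc1, hc1e⟩ := M.lift_z2 hcub hplanar (fun d => (e d).1)
    (fun d => congrArg Prod.fst (heα d)) (fun d => congrArg Prod.fst (hv d))
  obtain ⟨c2, hc2, hc2e⟩ := M.lift_z2 hcub hplanar (fun d => (e d).2)
    (fun d => congrArg Prod.snd (heα d)) (fun d => congrArg Prod.snd (hv d))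
  refine ⟨fun d => (c1 d, c2 d), fun d => ?_, fun d => ?_⟩
  · exact Prod.ext (hc1 d) (hc2 d)
  · exact Prod.ext (hc1e d) (hc2e d)

end CombMap

namespace CombMap
open TaitAux

variable (M : CombMap)

lemma face_ne_orbit (hcub : M.Cubic) {c : M.D → Fin 4} (hc : M.FaceColoring 4 c) (d : M.D) :
    c d ≠ c (M.σ (M.σ d)) := by
  have h1 := hc.2 (M.σ (M.σ d))
  have h2 : c (M.α (M.σ (M.σ d))) = c (M.σ (M.σ (M.σ d))) := M.alpha_eq_sigma hc.1 _
  rw [h2, hcub.1 d] at h1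
  exact h1.symm

lemma face_ne_sigma {c : M.D → Fin 4} (hc : M.FaceColoring 4 c) (d : M.D) :
    c d ≠ c (M.σ d) := by
  have := hc.2 d
  rw [M.alpha_eq_sigma hc.1 d] at this
  exact this

lemma kc_ne_zero {c : M.D → Fin 4} (hc : M.FaceColoring 4 c) (d : M.D) :
    k4 (c d) + k4 (c (M.σ d)) ≠ 0 := fun h =>
  M.face_ne_sigma hc d (k4_inj (K2_eq_of_add_eq_zero _ _ h))

/-- the induced edge coloring -/
def edgeOf (c : M.D → Fin 4) : M.D → Fin 3 :=
  fun d => p3 (k4 (c d) + k4 (c (M.σ d)))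

lemma edgeOf_col (hcub : M.Cubic) {c : M.D → Fin 4} (hc : M.FaceColoring 4 c) :
    M.EdgeColoring 3 (M.edgeOf c) := by
  have halphas : ∀ d, c (M.α d) = c (M.σ d) := M.alpha_eq_sigma hc.1
  constructor
  · intro d
    unfold edgeOf
    have h1 : c (M.σ (M.α d)) = c d := by rw [← phi_apply]; exact hc.1 d
    rw [halphas d, h1, add_comm]
  · intro d h
    unfold edgeOf at h
    have hx := M.kc_ne_zero hc d
    have hy := M.kc_ne_zero hc (M.σ d)
    have heq : k4 (c d) + k4 (c (M.σ d)) = k4 (c (M.σ d)) + k4 (c (M.σ (M.σ d))) := by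
      rw [← i3_p3 _ hx, ← i3_p3 _ hy, h]
    exact M.face_ne_orbit hcub hc d (k4_inj (K2_cancel2 _ _ _ heq))

end CombMap

open TaitAux in
theorem tait_four_face_colorings_eq_four_mul_three_edge_colorings'
    (M : CombMap) (hcub : M.Cubic) (hplanar : M.Planar) (hbr : M.Bridgeless) :
    Nat.card {c : M.D → Fin 4 // M.FaceColoring 4 c} =
      4 * Nat.card {c : M.D → Fin 3 // M.EdgeColoring 3 c} := by
  classical
  have hconn := hplanar.1
  have hne := M.nonempty_of_planar hplanar
  let d₀ : M.D := Classical.arbitrary M.D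
  let F : {c : M.D → Fin 4 // M.FaceColoring 4 c} →
      K2 × {e : M.D → Fin 3 // M.EdgeColoring 3 e} :=
    fun c => (k4 (c.1 d₀), ⟨M.edgeOf c.1, M.edgeOf_col hcub c.2⟩)
  have hbij : Function.Bijective F := by
    constructor
    · -- injectivity
      intro c c' h
      rw [Prod.mk.injEq] at h
      obtain ⟨h1, h2⟩ := h
      have h2' : ∀ d, M.edgeOf c.1 d = M.edgeOf c'.1 d :=
        fun d => congrFun (congrArg Subtype.val h2) d
      have hk : ∀ d, k4 (c.1 d) + k4 (c.1 (M.σ d)) = k4 (c'.1 d) + k4 (c'.1 (M.σ d)) := by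
        intro d
        have hd := h2' d
        unfold CombMap.edgeOf at hd
        rw [← i3_p3 _ (M.kc_ne_zero c.2 d), ← i3_p3 _ (M.kc_ne_zero c'.2 d), hd]
      set δ : M.D → K2 := fun d => k4 (c.1 d) + k4 (c'.1 d) with hδ
      have hδσ : ∀ d, δ (M.σ d) = δ d := fun d => (K2_rearrange _ _ _ _ (hk d)).symm
      have hδφ : ∀ d, δ (M.φ d) = δ d := by
        intro d
        simp only [hδ]
        rw [c.2.1 d, c'.2.1 d]
      have hδα : ∀ d, δ (M.α d) = δ d := fun d => by
        rw [M.alpha_eq_sigma hδφ d, hδσ d]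
      have hδ0 : δ d₀ = 0 := by
        simp only [hδ]
        rw [h1]
        exact K2_add_self _
      apply Subtype.ext
      funext d
      have hδd : δ d = 0 := by
        rw [← M.inv_conn hδσ hδα (hconn d₀ d), hδ0]
      exact k4_inj (K2_eq_of_add_eq_zero _ _ hδd)
    · -- surjectivity
      rintro ⟨k, e, he⟩
      have heα : ∀ d, (fun d => i3 (e d)) (M.α d) = (fun d => i3 (e d)) d :=
        fun d => congrArg i3 (he.1 d)
      have hv : ∀ d, i3 (e d) + i3 (e (M.σ d)) + i3 (e (M.σ (M.σ d))) = 0 := by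
        intro d
        have h3 : e (M.σ (M.σ d)) ≠ e d := by
          have := he.2 (M.σ (M.σ d))
          rw [hcub.1 d] at this
          exact this
        exact i3_sum_zero _ _ _ (he.2 d) (he.2 (M.σ d)) h3
      obtain ⟨cK, hcK, hcKe⟩ := M.lift_K2 hcub hplanar (fun d => i3 (e d)) heα hv
      have hcKα : ∀ d, cK (M.α d) = cK (M.σ d) := M.alpha_eq_sigma hcK
      set s : K2 := k + cK d₀ with hs
      let c4 : M.D → Fin 4 := fun d => k4inv (cK d + s)
      have hc4k : ∀ d, k4 (c4 d) = cK d + s := fun d => k4_k4inv _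
      have hc4 : M.FaceColoring 4 c4 := by
        constructor
        · intro d
          show k4inv (cK (M.φ d) + s) = k4inv (cK d + s)
          rw [hcK d]
        · intro d h
          have h' := congrArg k4 h
          rw [hc4k, hc4k] at h'
          have h'' : cK d = cK (M.σ d) := by
            have := add_right_cancel h'
            rw [this, hcKα d]
          have : i3 (e d) = 0 := by
            rw [← hcKe d, ← h'']
            exact K2_add_self _
          exact i3_ne_zero (e d) this
      refine ⟨⟨c4, hc4⟩, ?_⟩
      have hfst : k4 (c4 d₀) = k := by
        rw [hc4k, hs]
        exact K2_shift _ _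
      have hsnd : M.edgeOf c4 = e := by
        funext d
        show p3 (k4 (c4 d) + k4 (c4 (M.σ d))) = e d
        rw [hc4k, hc4k, K2_cancel, hcKe d, p3_i3]
      exact Prod.ext hfst (Subtype.ext hsnd)
  rw [Nat.card_eq_of_bijective F hbij, Nat.card_prod]
  congr 1
  simp [Nat.card_eq_fintype_card, ZMod.card]


/-- **Tait's theorem.**  For a connected bridgeless cubic plane graph, the number
of proper 4-face-colorings equals 4 times the number of proper 3-edge-colorings. -/
theorem tait_four_face_colorings_eq_four_mul_three_edge_colorings
    (M : CombMap) (hcub : M.Cubic) (hplanar : M.Planar) (hbr : M.Bridgeless) :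
    Nat.card {c : M.D → Fin 4 // M.FaceColoring 4 c} =
      4 * Nat.card {c : M.D → Fin 3 // M.EdgeColoring 3 c} := by
  exact tait_four_face_colorings_eq_four_mul_three_edge_colorings' M hcub hplanar hbr
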